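/- Fix α ∈ (0,1) and a constant β ∈ ℝ. For each sufficiently large d there exists a unique γ(d) > 2 solving (1/2)log d + β + Ω(γ(d)) − γ(d)²/2 = 0, where Ω is the log-potential of the semicircle law of radius 2, and the solution satisfies γ(d) = √(log d) + (log log d)/(2√(log d)) + β/√(log d) + o(1/√(log d)) as d → ∞. -/

import Mathlib

open scoped BigOperators
open Filter

/-- The logarithmic potential `Ω(u) = ∫ log|u-λ| dμ_sc(λ)` of the semicircle law of
radius `2`, with density `(1/2π)√(4-λ²)` on `[-2,2]`. -/
noncomputable def semicircleLogPotential (u : ℝ) : ℝ :=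
  ∫ l in (-2 : ℝ)..2, Real.log |u - l| * ((1 / (2 * Real.pi)) * Real.sqrt (4 - l ^ 2))

namespace Stmt17Aux

noncomputable def ρ (l : ℝ) : ℝ := (1 / (2 * Real.pi)) * Real.sqrt (4 - l ^ 2)

lemma ρ_cont : Continuous ρ := by
  unfold ρ; fun_prop

lemma ρ_nonneg (l : ℝ) : 0 ≤ ρ l := by
  unfold ρ
  positivity

lemma sqrt_four_sub_sq (l : ℝ) : Real.sqrt (4 - l ^ 2) = 2 * Real.sqrt (1 - (l / 2) ^ 2) := by
  rw [show (4 : ℝ) - l ^ 2 = 4 * (1 - (l / 2) ^ 2) by ring, show (4:ℝ) = 2^2 by norm_num,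
    Real.sqrt_mul (by positivity), Real.sqrt_sq (by norm_num)]

lemma ρ_integral : ∫ l in (-2 : ℝ)..2, ρ l = 1 := by
  have h : ∀ l : ℝ, ρ l = (1 / (2 * Real.pi)) * ((fun x => 2 * Real.sqrt (1 - x ^ 2)) (l / 2)) := by
    intro l; simp only [ρ, sqrt_four_sub_sq]
  simp only [h]
  rw [intervalIntegral.integral_const_mul, intervalIntegral.integral_comp_div
    (f := fun x => 2 * Real.sqrt (1 - x ^ 2)) (by norm_num : (2:ℝ) ≠ 0)]
  norm_num
  rw [integral_sqrt_one_sub_sq]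
  field_simp

end Stmt17Aux

namespace Stmt17Aux

lemma integrable_log_mul_ρ {u : ℝ} (hu : 2 < u) :
    IntervalIntegrable (fun l => Real.log (u - l) * ρ l) MeasureTheory.volume (-2) 2 := by
  apply ContinuousOn.intervalIntegrable
  refine ContinuousOn.mul (fun l hl => ?_) ρ_cont.continuousOn
  rw [Set.uIcc_of_le (by norm_num : (-2:ℝ) ≤ 2)] at hl
  have h0 : u - l ≠ 0 := by have := hl.2; intro h; nlinarith
  exact ((Real.continuousAt_log h0).comp
    ((continuous_const.sub continuous_id).continuousAt)).continuousWithinAt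

lemma Ω_eq {u : ℝ} (hu : 2 < u) :
    semicircleLogPotential u = ∫ l in (-2:ℝ)..2, Real.log (u - l) * ρ l := by
  unfold semicircleLogPotential
  apply intervalIntegral.integral_congr
  intro l hl
  rw [Set.uIcc_of_le (by norm_num : (-2:ℝ) ≤ 2)] at hl
  have : (0:ℝ) < u - l := by have := hl.2; linarith
  simp only [ρ, abs_of_pos this]

lemma Ω_le {u : ℝ} (hu : 2 < u) : semicircleLogPotential u ≤ Real.log (u + 2) := by
  rw [Ω_eq hu]
  have h1 : (∫ l in (-2:ℝ)..2, Real.log (u+2) * ρ l) = Real.log (u+2) := by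
    rw [intervalIntegral.integral_const_mul, ρ_integral, mul_one]
  rw [← h1]
  apply intervalIntegral.integral_mono_on (by norm_num) (integrable_log_mul_ρ hu)
    ((continuous_const.mul ρ_cont).intervalIntegrable _ _)
  intro l hl
  have hlog : Real.log (u - l) ≤ Real.log (u + 2) :=
    Real.log_le_log (by linarith [hl.2]) (by linarith [hl.1])
  exact mul_le_mul_of_nonneg_right hlog (ρ_nonneg l)

lemma Ω_ge {u : ℝ} (hu : 2 < u) : Real.log (u - 2) ≤ semicircleLogPotential u := by
  rw [Ω_eq hu]
  have h1 : (∫ l in (-2:ℝ)..2, Real.log (u-2) * ρ l) = Real.log (u-2) := by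
    rw [intervalIntegral.integral_const_mul, ρ_integral, mul_one]
  rw [← h1]
  apply intervalIntegral.integral_mono_on (by norm_num)
    ((continuous_const.mul ρ_cont).intervalIntegrable _ _) (integrable_log_mul_ρ hu)
  intro l hl
  have hlog : Real.log (u - 2) ≤ Real.log (u - l) :=
    Real.log_le_log (by linarith) (by linarith [hl.2])
  exact mul_le_mul_of_nonneg_right hlog (ρ_nonneg l)

noncomputable def w (l : ℝ) : ℝ := (2 - l) ^ (-(1/2) : ℝ)

lemma w_integrable : IntervalIntegrable w MeasureTheory.volume (-2) 2 := by
  have h := (intervalIntegral.intervalIntegrable_rpow' (a := 0) (b := 4)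
    (r := -(1/2)) (by norm_num)).comp_sub_left 2
  norm_num at h
  exact h.symm

lemma w_int : ∫ l in (-2:ℝ)..2, w l = 4 := by
  unfold w
  rw [intervalIntegral.integral_comp_sub_left (fun x => x ^ (-(1/2):ℝ)) 2]
  norm_num
  rw [integral_rpow (Or.inl (by norm_num))]
  rw [Real.zero_rpow (by norm_num)]
  norm_num

end Stmt17Aux

namespace Stmt17Aux

lemma pointwise_bound {u v l : ℝ} (hu : 2 < u) (huv : u < v) (hl : l ∈ Set.Icc (-2:ℝ) 2) :
    (Real.log (v - l) - Real.log (u - l)) * ρ l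
      ≤ (v - u) * ((1 / (2 * Real.pi)) * (2 * w l)) := by
  rcases eq_or_lt_of_le hl.2 with h2 | h2
  · have hρ : ρ l = 0 := by
      unfold ρ; rw [h2]; norm_num
    have hw0 : w l = 0 := by
      unfold w; rw [h2, sub_self, Real.zero_rpow (by norm_num)]
    simp [hρ, hw0]
  · have hul : 0 < u - l := by linarith
    have hvl : 0 < v - l := by linarith
    have h2l : 0 < 2 - l := by linarith
    have hlog : Real.log (v - l) - Real.log (u - l) ≤ (v - u) / (u - l) := by
      rw [← Real.log_div (ne_of_gt hvl) (ne_of_gt hul)]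
      calc Real.log ((v-l)/(u-l)) ≤ (v-l)/(u-l) - 1 :=
            Real.log_le_sub_one_of_pos (div_pos hvl hul)
        _ = (v-u)/(u-l) := by field_simp; ring
    have hsq : Real.sqrt (4 - l^2) ≤ 2 * Real.sqrt (2 - l) := by
      rw [show (4:ℝ) - l^2 = (2 - l) * (2 + l) by ring, Real.sqrt_mul h2l.le]
      have h4 : Real.sqrt (2 + l) ≤ 2 := by
        calc Real.sqrt (2 + l) ≤ Real.sqrt 4 := Real.sqrt_le_sqrt (by linarith [hl.1])
          _ = 2 := by
              rw [show (4:ℝ) = 2^2 by norm_num, Real.sqrt_sq (by norm_num : (0:ℝ) ≤ 2)]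
      nlinarith [Real.sqrt_nonneg (2 - l), Real.sqrt_nonneg (2 + l)]
    have hw : Real.sqrt (2 - l) / (2 - l) = w l := by
      unfold w
      rw [Real.sqrt_eq_rpow, show (-(1/2):ℝ) = 1/2 - 1 by norm_num,
        Real.rpow_sub h2l, Real.rpow_one]
    have key : ρ l / (u - l) ≤ (1 / (2 * Real.pi)) * (2 * w l) := by
      unfold ρ
      rw [mul_div_assoc]
      apply mul_le_mul_of_nonneg_left _ (by positivity)
      rw [← hw, div_le_iff₀ hul]
      calc Real.sqrt (4 - l^2) ≤ 2 * Real.sqrt (2-l) := hsq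
        _ = 2 * (Real.sqrt (2-l) / (2-l)) * (2-l) := by field_simp
        _ ≤ 2 * (Real.sqrt (2-l) / (2-l)) * (u-l) := by
            apply mul_le_mul_of_nonneg_left (by linarith) (by positivity)
    calc (Real.log (v - l) - Real.log (u - l)) * ρ l ≤ ((v - u) / (u - l)) * ρ l :=
          mul_le_mul_of_nonneg_right hlog (ρ_nonneg l)
      _ = (v - u) * (ρ l / (u - l)) := by ring
      _ ≤ (v - u) * ((1 / (2 * Real.pi)) * (2 * w l)) :=
          mul_le_mul_of_nonneg_left key (by linarith)

end Stmt17Aux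

namespace Stmt17Aux

lemma F_anti {u v : ℝ} (hu : 2 < u) (huv : u < v) :
    semicircleLogPotential v - v^2/2 < semicircleLogPotential u - u^2/2 := by
  have hv : 2 < v := hu.trans huv
  have key : semicircleLogPotential v - semicircleLogPotential u ≤ (v - u) * (4 / Real.pi) := by
    rw [Ω_eq hu, Ω_eq hv, ← intervalIntegral.integral_sub (integrable_log_mul_ρ hv)
      (integrable_log_mul_ρ hu)]
    have h2 : (∫ l in (-2:ℝ)..2, (v - u) * ((1 / (2 * Real.pi)) * (2 * w l)))
        = (v - u) * (4 / Real.pi) := by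
      rw [intervalIntegral.integral_const_mul, intervalIntegral.integral_const_mul,
        intervalIntegral.integral_const_mul, w_int]
      field_simp
    rw [← h2]
    apply intervalIntegral.integral_mono_on (by norm_num)
      ((integrable_log_mul_ρ hv).sub (integrable_log_mul_ρ hu))
      (((w_integrable.const_mul 2).const_mul _).const_mul _)
    intro l hl
    have := pointwise_bound hu huv hl
    calc Real.log (v - l) * ρ l - Real.log (u - l) * ρ l
        = (Real.log (v - l) - Real.log (u - l)) * ρ l := by ring
      _ ≤ (v - u) * ((1 / (2 * Real.pi)) * (2 * w l)) := this
  have hπ : 4 / Real.pi < 2 := by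
    rw [div_lt_iff₀ Real.pi_pos]
    linarith [Real.pi_gt_three]
  have h3 : (v - u) * (4 / Real.pi) < (v - u) * 2 :=
    mul_lt_mul_of_pos_left hπ (by linarith)
  nlinarith [key, h3]

noncomputable def G (u : ℝ) : ℝ := ∫ l in (-2:ℝ)..2, Real.log (max (u - l) 1) * ρ l

lemma G_cont : Continuous G := by
  apply intervalIntegral.continuous_parametric_intervalIntegral_of_continuous'
  apply Continuous.mul
  · apply Continuous.log
    · exact (continuous_fst.sub continuous_snd).max continuous_const
    · intro p
      have : (1:ℝ) ≤ max (p.1 - p.2) 1 := le_max_right _ _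
      positivity
  · exact ρ_cont.comp continuous_snd

lemma G_eq {u : ℝ} (hu : 3 ≤ u) : G u = semicircleLogPotential u := by
  unfold G semicircleLogPotential
  apply intervalIntegral.integral_congr
  intro l hl
  rw [Set.uIcc_of_le (by norm_num : (-2:ℝ) ≤ 2)] at hl
  have h1 : (1:ℝ) ≤ u - l := by linarith [hl.2]
  simp only [ρ, max_eq_left h1, abs_of_pos (by linarith : (0:ℝ) < u - l)]

end Stmt17Aux

namespace Stmt17Aux
lemma inv_sqrt_mul {x : ℝ} (hx : 0 < x) : (Real.sqrt x)⁻¹ * x = Real.sqrt x := by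
  nth_rewrite 2 [← Real.mul_self_sqrt hx.le]
  rw [← mul_assoc, inv_mul_cancel₀ (ne_of_gt (Real.sqrt_pos.2 hx)), one_mul]
end Stmt17Aux


set_option maxHeartbeats 2000000 in
/-- Fix `α ∈ (0,1)` and a constant `β ∈ ℝ`.  For every sufficiently
large `d` there is a unique `γ(d) > 2` solving
`(1/2) log d + β + Ω(γ(d)) - γ(d)²/2 = 0`, and
`γ(d) = √(log d) + (log log d)/(2√(log d)) + β/√(log d) + o(1/√(log d))` as `d → ∞`. -/
theorem stmt17 (α β : ℝ) (hα : α ∈ Set.Ioo (0 : ℝ) 1) :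
    ∃ γ : ℕ → ℝ,
      (∀ᶠ d : ℕ in atTop,
        (2 < γ d ∧
          (1 / 2) * Real.log d + β + semicircleLogPotential (γ d) - (γ d) ^ 2 / 2 = 0) ∧
        ∀ y : ℝ, 2 < y →
          (1 / 2) * Real.log d + β + semicircleLogPotential y - y ^ 2 / 2 = 0 →
            y = γ d) ∧
      Tendsto (fun d : ℕ =>
          (γ d - (Real.sqrt (Real.log d) + Real.log (Real.log d) / (2 * Real.sqrt (Real.log d))
            + β / Real.sqrt (Real.log d))) * Real.sqrt (Real.log d))
        atTop (nhds 0) := by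
  classical
  have hL : Tendsto (fun d : ℕ => Real.log d) atTop atTop :=
    Real.tendsto_log_atTop.comp tendsto_natCast_atTop_atTop
  have hsqrt : Tendsto Real.sqrt atTop atTop := by
    apply Filter.tendsto_atTop_atTop.2
    intro b
    refine ⟨b^2, fun a ha => ?_⟩
    calc b ≤ |b| := le_abs_self b
      _ = Real.sqrt (b^2) := (Real.sqrt_sq_eq_abs b).symm
      _ ≤ Real.sqrt a := Real.sqrt_le_sqrt ha
  have hS : Tendsto (fun d : ℕ => Real.sqrt (Real.log d)) atTop atTop := hsqrt.comp hL
  have hC1 : ∀ᶠ d : ℕ in atTop, 3 ≤ Real.sqrt (Real.log d) := hS.eventually_ge_atTop 3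
  have hC2 : ∀ᶠ d : ℕ in atTop, 0 < Real.log (Real.sqrt (Real.log d) - 2) + β := by
    have h1 : Tendsto (fun d : ℕ => Real.log (Real.sqrt (Real.log d) - 2) + β) atTop atTop := by
      apply tendsto_atTop_add_const_right
      apply Real.tendsto_log_atTop.comp
      exact (tendsto_atTop_add_const_right atTop (-2) hS).congr (fun d => by ring)
    exact h1.eventually_gt_atTop 0
  have hC3 : ∀ᶠ d : ℕ in atTop,
      Real.log (Real.sqrt (2 * Real.log d) + 2) + β < Real.log d / 2 := by
    have hlitt : ∀ᶠ x : ℝ in atTop, ‖Real.log x‖ ≤ 1/4 * ‖x‖ :=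
      Real.isLittleO_log_id_atTop.def (by norm_num)
    have h2 : ∀ᶠ d : ℕ in atTop, ‖Real.log (Real.log d + 2)‖ ≤ 1/4 * ‖Real.log d + 2‖ :=
      (tendsto_atTop_add_const_right atTop 2 hL).eventually hlitt
    filter_upwards [h2, hL.eventually_ge_atTop (max 2 (4*β + 4))] with d hd hd2
    have hge2 : (2:ℝ) ≤ Real.log d := le_trans (le_max_left _ _) hd2
    have hbound : Real.sqrt (2 * Real.log d) ≤ Real.log d := by
      have hb1 : Real.sqrt (2 * Real.log d) ≤ Real.sqrt ((Real.log d)^2) :=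
        Real.sqrt_le_sqrt (by nlinarith)
      rwa [Real.sqrt_sq (by linarith)] at hb1
    have hlogmono : Real.log (Real.sqrt (2*Real.log d) + 2) ≤ Real.log (Real.log d + 2) :=
      Real.log_le_log (by positivity) (by linarith)
    have habs : Real.log (Real.log d + 2) ≤ 1/4 * (Real.log d + 2) := by
      have h0 : (0:ℝ) ≤ Real.log d + 2 := by linarith
      calc Real.log (Real.log d + 2) ≤ ‖Real.log (Real.log d + 2)‖ := le_abs_self _
        _ ≤ 1/4 * ‖Real.log d + 2‖ := hd
        _ = 1/4 * (Real.log d + 2) := by rw [Real.norm_eq_abs, abs_of_nonneg h0]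
    have hfin : 4*β + 4 ≤ Real.log d := le_trans (le_max_right _ _) hd2
    linarith
  let P : ℕ → ℝ → Prop := fun d y =>
    2 < y ∧ (1/2) * Real.log d + β + semicircleLogPotential y - y^2/2 = 0
  let γ : ℕ → ℝ := fun d => if h : ∃ y, P d y then h.choose else 3
  have hγdef : ∀ d : ℕ, (∃ y, P d y) → P d (γ d) := by
    intro d h
    simp only [γ, dif_pos h]
    exact h.choose_spec
  have main : ∀ᶠ d : ℕ in atTop,
      ((2 < γ d ∧ (1/2) * Real.log d + β + semicircleLogPotential (γ d) - (γ d)^2/2 = 0) ∧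
        ∀ y : ℝ, 2 < y → (1/2) * Real.log d + β + semicircleLogPotential y - y^2/2 = 0 →
          y = γ d)
      ∧ Real.sqrt (Real.log d) ≤ γ d ∧ γ d ≤ Real.sqrt (2 * Real.log d) := by
    filter_upwards [hC1, hC2, hC3] with d h1 h2 h3
    have hLpos : (0:ℝ) < Real.log d := by nlinarith [Real.sqrt_nonneg (Real.log d), Real.sq_sqrt (le_of_not_gt (fun hc => by
      rw [Real.sqrt_eq_zero_of_nonpos hc.le] at h1; norm_num at h1))]
    set L := Real.log d with hLdef
    set S := Real.sqrt L with hSdef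
    have hS3 : 3 ≤ S := h1
    have hS2L : S ≤ Real.sqrt (2*L) := Real.sqrt_le_sqrt (by linarith)
    have hT3 : 3 ≤ Real.sqrt (2*L) := le_trans hS3 hS2L
    have hSsq : S^2 = L := Real.sq_sqrt hLpos.le
    have h2Lsq : (Real.sqrt (2*L))^2 = 2*L := Real.sq_sqrt (by linarith)
    have hcont : ContinuousOn (fun u => Stmt17Aux.G u - u^2/2)
        (Set.Icc S (Real.sqrt (2*L))) := (Stmt17Aux.G_cont.sub (by fun_prop)).continuousOn
    have hFa : -(L/2) - β < Stmt17Aux.G S - S^2/2 := by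
      rw [Stmt17Aux.G_eq hS3, hSsq]
      have := Stmt17Aux.Ω_ge (by linarith : (2:ℝ) < S)
      linarith
    have hFb : Stmt17Aux.G (Real.sqrt (2*L)) - (Real.sqrt (2*L))^2/2 < -(L/2) - β := by
      rw [Stmt17Aux.G_eq hT3, h2Lsq]
      have := Stmt17Aux.Ω_le (by linarith : (2:ℝ) < Real.sqrt (2*L))
      linarith
    obtain ⟨g, hg_mem, hg_eq⟩ : ∃ g ∈ Set.Icc S (Real.sqrt (2*L)),
        Stmt17Aux.G g - g^2/2 = -(L/2) - β :=
      intermediate_value_Icc' hS2L hcont ⟨hFb.le, hFa.le⟩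
    have hg2 : (2:ℝ) < g := by linarith [hg_mem.1]
    have hgeq : (1/2) * L + β + semicircleLogPotential g - g^2/2 = 0 := by
      rw [← Stmt17Aux.G_eq (le_trans hS3 hg_mem.1)]
      linarith
    have huniq : ∀ y z : ℝ, 2 < y → 2 < z →
        (1/2) * L + β + semicircleLogPotential y - y^2/2 = 0 →
        (1/2) * L + β + semicircleLogPotential z - z^2/2 = 0 → y = z := by
      intro y z hy hz ey ez
      rcases lt_trichotomy y z with h|h|h
      · have := Stmt17Aux.F_anti hy h; linarith
      · exact h
      · have := Stmt17Aux.F_anti hz h; linarith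
    have hex : ∃ y, P d y := ⟨g, hg2, hgeq⟩
    obtain ⟨hγ2, hγeq⟩ := hγdef d hex
    have hγg : γ d = g := huniq _ _ hγ2 hg2 hγeq hgeq
    exact ⟨⟨⟨hγ2, hγeq⟩, fun y hy hyeq => huniq _ _ hy hγ2 hyeq hγeq⟩,
      hγg ▸ hg_mem.1, hγg ▸ hg_mem.2⟩
  -- ### asymptotics
  have hLL : Tendsto (fun d : ℕ => Real.log (Real.log d)) atTop atTop :=
    Real.tendsto_log_atTop.comp hL
  have hinvS : Tendsto (fun d : ℕ => (Real.sqrt (Real.log d))⁻¹) atTop (nhds 0) :=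
    tendsto_inv_atTop_zero.comp hS
  have hinvL : Tendsto (fun d : ℕ => (Real.log d)⁻¹) atTop (nhds 0) :=
    tendsto_inv_atTop_zero.comp hL
  have hLpos : ∀ᶠ d : ℕ in atTop, 0 < Real.log d := hL.eventually_gt_atTop 0
  -- log(√L - 2)/L → 0
  have hA1 : Tendsto (fun d : ℕ =>
      Real.log (Real.sqrt (Real.log d) - 2) / Real.log d) atTop (nhds 0) := by
    apply tendsto_of_tendsto_of_tendsto_of_le_of_le' tendsto_const_nhds hinvS
    · filter_upwards [hC1, hLpos] with d h1 h2
      have : (0:ℝ) ≤ Real.log (Real.sqrt (Real.log d) - 2) :=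
        Real.log_nonneg (by linarith)
      positivity
    · filter_upwards [hC1, hLpos] with d h1 h2
      have hSsq : Real.sqrt (Real.log d) ^ 2 = Real.log d := Real.sq_sqrt h2.le
      have hlog : Real.log (Real.sqrt (Real.log d) - 2) ≤ Real.sqrt (Real.log d) := by
        have := Real.log_le_sub_one_of_pos (by linarith : (0:ℝ) < Real.sqrt (Real.log d) - 2)
        linarith
      rw [div_le_iff₀ h2]
      calc Real.log (Real.sqrt (Real.log d) - 2) ≤ Real.sqrt (Real.log d) := hlog
        _ = (Real.sqrt (Real.log d))⁻¹ * Real.log d := (Stmt17Aux.inv_sqrt_mul h2).symm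
  -- log(√(2L)+2)/L → 0
  have hA2 : Tendsto (fun d : ℕ =>
      Real.log (Real.sqrt (2 * Real.log d) + 2) / Real.log d) atTop (nhds 0) := by
    have hub : Tendsto (fun d : ℕ =>
        Real.sqrt 2 * (Real.sqrt (Real.log d))⁻¹ + 2 * (Real.log d)⁻¹) atTop (nhds 0) := by
      have := (hinvS.const_mul (Real.sqrt 2)).add (hinvL.const_mul 2)
      simpa using this
    apply tendsto_of_tendsto_of_tendsto_of_le_of_le' tendsto_const_nhds hub
    · filter_upwards [hC1, hLpos] with d h1 h2
      have hT3 : (3:ℝ) ≤ Real.sqrt (2 * Real.log d) :=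
        le_trans h1 (Real.sqrt_le_sqrt (by linarith))
      have : (0:ℝ) ≤ Real.log (Real.sqrt (2 * Real.log d) + 2) :=
        Real.log_nonneg (by linarith)
      positivity
    · filter_upwards [hC1, hLpos] with d h1 h2
      have hSsq : Real.sqrt (Real.log d) ^ 2 = Real.log d := Real.sq_sqrt h2.le
      have hsplit : Real.sqrt (2 * Real.log d) = Real.sqrt 2 * Real.sqrt (Real.log d) :=
        Real.sqrt_mul (by norm_num) _
      have hT0 : (0:ℝ) < Real.sqrt (2 * Real.log d) + 2 := by positivity
      have hlog : Real.log (Real.sqrt (2 * Real.log d) + 2)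
          ≤ Real.sqrt 2 * Real.sqrt (Real.log d) + 2 := by
        have := Real.log_le_sub_one_of_pos hT0
        rw [hsplit] at this ⊢
        linarith
      rw [div_le_iff₀ h2]
      have hS0 : (0:ℝ) < Real.sqrt (Real.log d) := by linarith
      calc Real.log (Real.sqrt (2 * Real.log d) + 2)
          ≤ Real.sqrt 2 * Real.sqrt (Real.log d) + 2 := hlog
        _ = (Real.sqrt 2 * (Real.sqrt (Real.log d))⁻¹ + 2 * (Real.log d)⁻¹) * Real.log d := by
            have e1 := Stmt17Aux.inv_sqrt_mul h2
            have e2 : (Real.log (d:ℕ))⁻¹ * Real.log (d:ℕ) = 1 := inv_mul_cancel₀ h2.ne'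
            calc Real.sqrt 2 * Real.sqrt (Real.log d) + 2
                = Real.sqrt 2 * ((Real.sqrt (Real.log d))⁻¹ * Real.log d)
                  + 2 * ((Real.log (d:ℕ))⁻¹ * Real.log (d:ℕ)) := by rw [e1, e2]; ring
              _ = _ := by ring
  -- γ²/L → 1
  have hX : Tendsto (fun d : ℕ => (γ d)^2 / Real.log d) atTop (nhds 1) := by
    have hlow : Tendsto (fun d : ℕ =>
        1 + ((2*β) * (Real.log d)⁻¹ +
          2 * (Real.log (Real.sqrt (Real.log d) - 2) / Real.log d))) atTop (nhds 1) := by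
      simpa using tendsto_const_nhds.add ((hinvL.const_mul (2*β)).add (hA1.const_mul 2))
    have hupp : Tendsto (fun d : ℕ =>
        1 + ((2*β) * (Real.log d)⁻¹ +
          2 * (Real.log (Real.sqrt (2 * Real.log d) + 2) / Real.log d))) atTop (nhds 1) := by
      simpa using tendsto_const_nhds.add ((hinvL.const_mul (2*β)).add (hA2.const_mul 2))
    apply tendsto_of_tendsto_of_tendsto_of_le_of_le' hlow hupp
    · filter_upwards [main, hC1, hLpos] with d hm h1 h2
      obtain ⟨⟨⟨hg2, heq⟩, _⟩, hgS, hgT⟩ := hm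
      have hmono1 : Real.log (Real.sqrt (Real.log d) - 2) ≤ Real.log (γ d - 2) :=
        Real.log_le_log (by linarith) (by linarith)
      have hΩge := Stmt17Aux.Ω_ge hg2
      have hnum : Real.log d + 2*β + 2 * Real.log (Real.sqrt (Real.log d) - 2) ≤ (γ d)^2 := by
        linarith
      have hLHS : 1 + ((2*β) * (Real.log d)⁻¹ +
          2 * (Real.log (Real.sqrt (Real.log d) - 2) / Real.log d))
          = (Real.log d + 2*β + 2 * Real.log (Real.sqrt (Real.log d) - 2)) / Real.log d := by
        field_simp
        ring
      rw [hLHS]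
      exact (div_le_div_iff_of_pos_right h2).2 hnum
    · filter_upwards [main, hC1, hLpos] with d hm h1 h2
      obtain ⟨⟨⟨hg2, heq⟩, _⟩, hgS, hgT⟩ := hm
      have hmono2 : Real.log (γ d + 2) ≤ Real.log (Real.sqrt (2 * Real.log d) + 2) :=
        Real.log_le_log (by linarith) (by linarith)
      have hΩle := Stmt17Aux.Ω_le hg2
      have hnum : (γ d)^2 ≤ Real.log d + 2*β + 2 * Real.log (Real.sqrt (2*Real.log d) + 2) := by
        linarith
      have hRHS : 1 + ((2*β) * (Real.log d)⁻¹ +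
          2 * (Real.log (Real.sqrt (2 * Real.log d) + 2) / Real.log d))
          = (Real.log d + 2*β + 2 * Real.log (Real.sqrt (2 * Real.log d) + 2)) / Real.log d := by
        field_simp
        ring
      rw [hRHS]
      exact (div_le_div_iff_of_pos_right h2).2 hnum
  -- γ/√L → 1
  have hgS1 : Tendsto (fun d : ℕ => γ d / Real.sqrt (Real.log d)) atTop (nhds 1) := by
    have h := (Real.continuous_sqrt.tendsto 1).comp hX
    rw [Real.sqrt_one] at h
    apply h.congr'
    filter_upwards [main, hC1] with d hm h1
    obtain ⟨_, hgS, _⟩ := hm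
    show Real.sqrt ((γ d)^2 / Real.log d) = γ d / Real.sqrt (Real.log d)
    rw [Real.sqrt_div (by positivity), Real.sqrt_sq (by linarith)]
  -- (γ∓2)²/L → 1
  have hshift : ∀ a : ℝ, Tendsto (fun d : ℕ => (γ d + a)^2 / Real.log d) atTop (nhds 1) := by
    intro a
    have hb : Tendsto (fun d : ℕ =>
        (γ d / Real.sqrt (Real.log d) + a * (Real.sqrt (Real.log d))⁻¹)^2) atTop (nhds 1) := by
      simpa using (hgS1.add (hinvS.const_mul a)).pow 2
    apply hb.congr'
    filter_upwards [hC1, hLpos] with d h1 h2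
    have hS0 : (0:ℝ) < Real.sqrt (Real.log d) := by linarith
    have he : γ d / Real.sqrt (Real.log d) + a * (Real.sqrt (Real.log d))⁻¹
        = (γ d + a) / Real.sqrt (Real.log d) := by
      field_simp
    rw [he, div_pow, Real.sq_sqrt h2.le]
  have hlogm : Tendsto (fun d : ℕ => Real.log ((γ d - 2)^2 / Real.log d)) atTop (nhds 0) := by
    have h := (Real.continuousAt_log one_ne_zero).tendsto.comp
      ((hshift (-2)).congr (fun d => by ring) : Tendsto (fun d : ℕ => (γ d - 2)^2 / Real.log d) atTop (nhds 1))
    rw [Real.log_one] at h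
    exact h
  have hlogp : Tendsto (fun d : ℕ => Real.log ((γ d + 2)^2 / Real.log d)) atTop (nhds 0) := by
    have h := (Real.continuousAt_log one_ne_zero).tendsto.comp (hshift 2)
    rw [Real.log_one] at h
    exact h
  -- Y → 0
  have hY : Tendsto (fun d : ℕ =>
      (γ d)^2 - Real.log d - 2*β - Real.log (Real.log d)) atTop (nhds 0) := by
    apply tendsto_of_tendsto_of_tendsto_of_le_of_le' hlogm hlogp
    · filter_upwards [main, hC1, hLpos] with d hm h1 h2
      obtain ⟨⟨⟨hg2, heq⟩, _⟩, hgS, hgT⟩ := hm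
      have hΩge := Stmt17Aux.Ω_ge hg2
      have hrw : Real.log ((γ d - 2)^2 / Real.log d)
          = 2 * Real.log (γ d - 2) - Real.log (Real.log d) := by
        rw [Real.log_div (pow_ne_zero 2 (by linarith : γ d - 2 ≠ 0)) h2.ne', Real.log_pow]
        push_cast
        ring
      rw [hrw]
      linarith
    · filter_upwards [main, hC1, hLpos] with d hm h1 h2
      obtain ⟨⟨⟨hg2, heq⟩, _⟩, hgS, hgT⟩ := hm
      have hΩle := Stmt17Aux.Ω_le hg2
      have hrw : Real.log ((γ d + 2)^2 / Real.log d)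
          = 2 * Real.log (γ d + 2) - Real.log (Real.log d) := by
        rw [Real.log_div (by positivity) h2.ne', Real.log_pow]
        push_cast
        ring
      rw [hrw]
      linarith
  -- c → 0
  have hc0 : Tendsto (fun d : ℕ =>
      (Real.log (Real.log d) + 2*β) / (2 * Real.sqrt (Real.log d))) atTop (nhds 0) := by
    have hlogdiv : Tendsto (fun x : ℝ => Real.log x / x ^ ((1:ℝ)/2)) atTop (nhds 0) :=
      (isLittleO_log_rpow_atTop (by norm_num)).tendsto_div_nhds_zero
    have h1 : Tendsto (fun d : ℕ => Real.log (Real.log d) / Real.sqrt (Real.log d))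
        atTop (nhds 0) := by
      have h := hlogdiv.comp hL
      apply h.congr
      intro d
      show Real.log (Real.log d) / (Real.log d) ^ ((1:ℝ)/2) = _
      rw [← Real.sqrt_eq_rpow]
    have h2 := (h1.const_mul (1/2)).add (hinvS.const_mul β)
    rw [show (1/2 : ℝ) * 0 + β * 0 = 0 by ring] at h2
    apply h2.congr'
    filter_upwards [hC1] with d h1'
    have hS0 : (0:ℝ) < Real.sqrt (Real.log d) := by linarith
    field_simp
  -- A → 0
  have hA : Tendsto (fun d : ℕ =>
      ((γ d)^2 - Real.log d - 2*β - Real.log (Real.log d))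
        - ((Real.log (Real.log d) + 2*β) / (2 * Real.sqrt (Real.log d)))^2)
      atTop (nhds 0) := by
    simpa using hY.sub (hc0.pow 2)
  have habs : Tendsto (fun d : ℕ =>
      |((γ d)^2 - Real.log d - 2*β - Real.log (Real.log d))
        - ((Real.log (Real.log d) + 2*β) / (2 * Real.sqrt (Real.log d)))^2|)
      atTop (nhds 0) := by
    simpa using hA.abs
  have final : Tendsto (fun d : ℕ =>
      (γ d - (Real.sqrt (Real.log d) + Real.log (Real.log d) / (2 * Real.sqrt (Real.log d))
        + β / Real.sqrt (Real.log d))) * Real.sqrt (Real.log d)) atTop (nhds 0) := by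
    apply squeeze_zero_norm' _ habs
    filter_upwards [main, hC1, hLpos, hLL.eventually_ge_atTop (-(2*β))] with d hm h1 h2 h4
    obtain ⟨⟨⟨hg2, heq⟩, _⟩, hgS, hgT⟩ := hm
    have hS0 : (0:ℝ) < Real.sqrt (Real.log d) := by linarith
    have hSsq : Real.sqrt (Real.log d) ^ 2 = Real.log d := Real.sq_sqrt h2.le
    set S := Real.sqrt (Real.log d) with hSdef
    set LL := Real.log (Real.log d) with hLLdef
    set c := (LL + 2*β) / (2 * S) with hcdef
    have hcnn : 0 ≤ c := div_nonneg (by linarith) (by linarith)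
    have hc_eq : S + LL/(2*S) + β/S = S + c := by
      rw [hcdef]
      field_simp
      ring
    have h2Sc : 2*S*c = LL + 2*β := by
      rw [hcdef]
      field_simp
    have hs_sq : (S + c)^2 = Real.log d + (LL + 2*β) + c^2 := by
      linear_combination hSsq + h2Sc
    have hγnn : 0 ≤ γ d := by linarith
    calc ‖(γ d - (S + LL/(2*S) + β/S)) * S‖
        = |γ d - (S + c)| * S := by
          rw [hc_eq, norm_mul, Real.norm_eq_abs, Real.norm_eq_abs, abs_of_pos hS0]
      _ ≤ |γ d - (S + c)| * (γ d + (S + c)) := by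
          apply mul_le_mul_of_nonneg_left (by linarith) (abs_nonneg _)
      _ = |(γ d - (S + c)) * (γ d + (S + c))| := by
          rw [abs_mul, abs_of_nonneg (by linarith : (0:ℝ) ≤ γ d + (S + c))]
      _ = |(γ d)^2 - Real.log d - 2*β - LL - c^2| := by
          rw [show (γ d - (S + c)) * (γ d + (S + c)) = (γ d)^2 - (S+c)^2 by ring, hs_sq]
          ring_nf
  exact ⟨γ, main.mono (fun d h => h.1), final⟩
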